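/- Let W1 be the smallest subspace of V ⊗ U containing e_0⊗f_0 and invariant under the operators N⊗id and id⊗M', and let W2 be the smallest subspace of V ⊗ U containing e_{λ0}⊗f_{λ1} and invariant under the same two operators. Then W1 = span{ e_m⊗f_0 : 0 ≤ m ≤ λ0 }, W2 = span{ e_{λ0}⊗f_m : 0 ≤ m ≤ λ1 }, the intersection W1 ∩ W2 is the line ℂ·(e_{λ0}⊗f_0), and dim(W1 + W2) = λ0 + λ1 + 1, which equals the dimension of the irreducible sl_2-module of highest weight λ0+λ1. -/

import Mathlib

/-- The model of `V ⊗ U` in coordinates, where `V = ℂ^{λ0+1}` with basis `e_0,…,e_{λ0}`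
and `U = ℂ^{λ1+1}` with basis `f_0,…,f_{λ1}`: a vector is the function assigning to each
basis index `(i,j)` (for `e_i ⊗ f_j`) its coefficient. -/
abbrev Tensor (l0 l1 : ℕ) : Type := Fin (l0 + 1) × Fin (l1 + 1) → ℂ

/-- The operator `N⊗id`, where `N` is the lowering shift `e_i ↦ e_{i+1}` (`e_{λ0} ↦ 0`):
the coefficient of `e_i ⊗ f_j` in `(N⊗id) v` is the coefficient of `e_{i-1} ⊗ f_j` in
`v` (zero for `i = 0`). -/
def T1 (l0 l1 : ℕ) (v : Tensor l0 l1) : Tensor l0 l1 :=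
  fun p => if h : 0 < p.1.val then v (⟨p.1.val - 1, by have := p.1.isLt; omega⟩, p.2) else 0

/-- The operator `id⊗M'`, where `M'` is the raising shift `f_i ↦ f_{i-1}` (`f_0 ↦ 0`):
the coefficient of `e_i ⊗ f_j` in `(id⊗M') v` is the coefficient of `e_i ⊗ f_{j+1}` in
`v` (zero for `j = λ1`). -/
def T2 (l0 l1 : ℕ) (v : Tensor l0 l1) : Tensor l0 l1 :=
  fun p => if h : p.2.val < l1 then v (p.1, ⟨p.2.val + 1, by omega⟩) else 0

/-- `e_0 ⊗ f_0`. -/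
def v00 (l0 l1 : ℕ) : Tensor l0 l1 := Pi.single (0, 0) 1

/-- `e_{λ0} ⊗ f_{λ1}`. -/
def vLast (l0 l1 : ℕ) : Tensor l0 l1 := Pi.single (Fin.last l0, Fin.last l1) 1

/-- `span{ e_m ⊗ f_0 : 0 ≤ m ≤ λ0 }`. -/
noncomputable def S1 (l0 l1 : ℕ) : Submodule ℂ (Tensor l0 l1) :=
  Submodule.span ℂ (Set.range fun m : Fin (l0 + 1) =>
    (Pi.single (m, (0 : Fin (l1 + 1))) 1 : Tensor l0 l1))

/-- `span{ e_{λ0} ⊗ f_m : 0 ≤ m ≤ λ1 }`. -/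
noncomputable def S2 (l0 l1 : ℕ) : Submodule ℂ (Tensor l0 l1) :=
  Submodule.span ℂ (Set.range fun m : Fin (l1 + 1) =>
    (Pi.single (Fin.last l0, m) 1 : Tensor l0 l1))

/-- "`W` contains `v` and is invariant under `N⊗id` and `id⊗M'`". -/
def IsInvSub (l0 l1 : ℕ) (v : Tensor l0 l1) (W : Submodule ℂ (Tensor l0 l1)) : Prop :=
  v ∈ W ∧ (∀ x ∈ W, T1 l0 l1 x ∈ W) ∧ (∀ x ∈ W, T2 l0 l1 x ∈ W)

/-- `S1` is the smallest subspace of `V ⊗ U` containing `e_0⊗f_0` and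
invariant under `N⊗id` and `id⊗M'`; `S2` is the smallest such subspace containing
`e_{λ0}⊗f_{λ1}`; their intersection is the line `ℂ·(e_{λ0}⊗f_0)`; and
`dim(S1 + S2) = λ0 + λ1 + 1`, the dimension of the irreducible `sl_2`-module of highest
weight `λ0 + λ1`. -/


lemma mem_S1_of_vanish (l0 l1 : ℕ) (v : Tensor l0 l1)
    (hv : ∀ p : Fin (l0+1) × Fin (l1+1), p.2 ≠ 0 → v p = 0) : v ∈ S1 l0 l1 := by
  have : v = ∑ m : Fin (l0+1), v (m, 0) • (Pi.single (m, (0 : Fin (l1+1))) 1 : Tensor l0 l1) := by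
    funext p
    rw [Finset.sum_apply]
    simp only [Pi.smul_apply, Pi.single_apply, smul_eq_mul, mul_ite, mul_one, mul_zero]
    by_cases hp : p.2 = 0
    · obtain ⟨p1, p2⟩ := p
      subst hp
      simp [Prod.mk.injEq, Finset.sum_ite_eq]
    · rw [hv p hp]
      symm
      apply Finset.sum_eq_zero
      intro m _
      rw [if_neg]
      intro h
      exact hp (by rw [h])
  rw [this]
  exact Submodule.sum_mem _ fun m _ => Submodule.smul_mem _ _
    (Submodule.subset_span ⟨m, rfl⟩)

lemma vanish_of_mem_S1 (l0 l1 : ℕ) (v : Tensor l0 l1) (hv : v ∈ S1 l0 l1) :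
    ∀ p : Fin (l0+1) × Fin (l1+1), p.2 ≠ 0 → v p = 0 := by
  induction hv using Submodule.span_induction with
  | mem x hx =>
    obtain ⟨m, rfl⟩ := hx
    intro p hp
    apply Pi.single_eq_of_ne
    intro h
    exact hp (by rw [h])
  | zero => intro p _; rfl
  | add x y _ _ hx hy => intro p hp; simp [hx p hp, hy p hp]
  | smul c x _ hx => intro p hp; simp [hx p hp]

lemma mem_S2_of_vanish (l0 l1 : ℕ) (v : Tensor l0 l1)
    (hv : ∀ p : Fin (l0+1) × Fin (l1+1), p.1 ≠ Fin.last l0 → v p = 0) : v ∈ S2 l0 l1 := by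
  have : v = ∑ m : Fin (l1+1), v (Fin.last l0, m) • (Pi.single (Fin.last l0, m) 1 : Tensor l0 l1) := by
    funext p
    rw [Finset.sum_apply]
    simp only [Pi.smul_apply, Pi.single_apply, smul_eq_mul, mul_ite, mul_one, mul_zero]
    by_cases hp : p.1 = Fin.last l0
    · obtain ⟨p1, p2⟩ := p
      simp only at hp
      subst hp
      simp [Prod.mk.injEq, Finset.sum_ite_eq]
    · rw [hv p hp]
      symm
      apply Finset.sum_eq_zero
      intro m _
      rw [if_neg]
      intro h
      exact hp (by rw [h])
  rw [this]
  exact Submodule.sum_mem _ fun m _ => Submodule.smul_mem _ _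
    (Submodule.subset_span ⟨m, rfl⟩)

lemma vanish_of_mem_S2 (l0 l1 : ℕ) (v : Tensor l0 l1) (hv : v ∈ S2 l0 l1) :
    ∀ p : Fin (l0+1) × Fin (l1+1), p.1 ≠ Fin.last l0 → v p = 0 := by
  induction hv using Submodule.span_induction with
  | mem x hx =>
    obtain ⟨m, rfl⟩ := hx
    intro p hp
    apply Pi.single_eq_of_ne
    intro h
    exact hp (by rw [h])
  | zero => intro p _; rfl
  | add x y _ _ hx hy => intro p hp; simp [hx p hp, hy p hp]
  | smul c x _ hx => intro p hp; simp [hx p hp]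

lemma T1_single (l0 l1 : ℕ) (k : ℕ) (hk : k < l0) (j : Fin (l1+1)) :
    T1 l0 l1 (Pi.single ((⟨k, by omega⟩ : Fin (l0+1)), j) 1)
      = Pi.single ((⟨k+1, by omega⟩ : Fin (l0+1)), j) 1 := by
  funext p
  obtain ⟨⟨i, hi⟩, j'⟩ := p
  simp only [T1, Pi.single_apply, Prod.mk.injEq, Fin.mk.injEq, Prod.ext_iff, Fin.ext_iff]
  split_ifs with h1 h2 h3 h3 <;> simp_all <;> omega

lemma T2_single (l0 l1 : ℕ) (k : ℕ) (hk : k < l1) (i : Fin (l0+1)) :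
    T2 l0 l1 (Pi.single (i, (⟨k+1, by omega⟩ : Fin (l1+1))) 1)
      = Pi.single (i, (⟨k, by omega⟩ : Fin (l1+1))) 1 := by
  funext p
  obtain ⟨i', ⟨j, hj⟩⟩ := p
  simp only [T2, Pi.single_apply, Prod.mk.injEq, Fin.mk.injEq, Prod.ext_iff, Fin.ext_iff]
  split_ifs with h1 h2 h3 h3 <;> simp_all <;> omega

lemma inter_eq (l0 l1 : ℕ) : S1 l0 l1 ⊓ S2 l0 l1
    = Submodule.span ℂ {(Pi.single (Fin.last l0, (0 : Fin (l1 + 1))) 1 : Tensor l0 l1)} := by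
  apply le_antisymm
  · rintro v ⟨hv1, hv2⟩
    have h1 := vanish_of_mem_S1 l0 l1 v hv1
    have h2 := vanish_of_mem_S2 l0 l1 v hv2
    rw [Submodule.mem_span_singleton]
    refine ⟨v (Fin.last l0, 0), ?_⟩
    funext p
    symm
    simp only [Pi.smul_apply, Pi.single_apply, smul_eq_mul, mul_ite, mul_one, mul_zero]
    by_cases hp : p = (Fin.last l0, 0)
    · rw [if_pos hp, hp]
    · rw [if_neg hp]
      by_cases hp1 : p.1 = Fin.last l0
      · apply h1
        intro hc
        exact hp (Prod.ext hp1 hc)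
      · exact h2 p hp1
  · rw [Submodule.span_le, Set.singleton_subset_iff]
    exact ⟨Submodule.subset_span ⟨Fin.last l0, rfl⟩, Submodule.subset_span ⟨0, rfl⟩⟩

theorem statement14 (l0 l1 : ℕ) :
    (IsInvSub l0 l1 (v00 l0 l1) (S1 l0 l1) ∧
      ∀ W : Submodule ℂ (Tensor l0 l1), IsInvSub l0 l1 (v00 l0 l1) W → S1 l0 l1 ≤ W) ∧
    (IsInvSub l0 l1 (vLast l0 l1) (S2 l0 l1) ∧
      ∀ W : Submodule ℂ (Tensor l0 l1), IsInvSub l0 l1 (vLast l0 l1) W → S2 l0 l1 ≤ W) ∧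
    S1 l0 l1 ⊓ S2 l0 l1
      = Submodule.span ℂ {(Pi.single (Fin.last l0, (0 : Fin (l1 + 1))) 1 : Tensor l0 l1)} ∧
    Module.finrank ℂ ↥(S1 l0 l1 ⊔ S2 l0 l1) = l0 + l1 + 1 := by
  refine ⟨⟨⟨?_, ?_, ?_⟩, ?_⟩, ⟨⟨?_, ?_, ?_⟩, ?_⟩, ?_, ?_⟩
  · -- v00 ∈ S1
    exact Submodule.subset_span ⟨0, rfl⟩
  · -- T1 invariance of S1
    intro x hx
    apply mem_S1_of_vanish
    intro p hp
    simp only [T1]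
    split_ifs with h
    · exact vanish_of_mem_S1 l0 l1 x hx _ hp
    · rfl
  · -- T2 invariance of S1
    intro x hx
    apply mem_S1_of_vanish
    intro p hp
    simp only [T2]
    split_ifs with h
    · apply vanish_of_mem_S1 l0 l1 x hx
      intro hc
      have := congrArg Fin.val hc
      simp only [Fin.val_zero, Fin.val_mk] at this
      omega
    · rfl
  · -- minimality of S1
    rintro W ⟨hv, hT1, _⟩
    apply Submodule.span_le.mpr
    rintro _ ⟨m, rfl⟩
    have key : ∀ k (hk : k ≤ l0),
        (Pi.single ((⟨k, by omega⟩ : Fin (l0+1)), (0 : Fin (l1+1))) 1 : Tensor l0 l1) ∈ W := by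
      intro k
      induction k with
      | zero => intro _; exact hv
      | succ n ih =>
        intro hk
        have := hT1 _ (ih (by omega))
        rwa [T1_single l0 l1 n (by omega)] at this
    have := key m.val (by omega)
    simpa using this
  · -- vLast ∈ S2
    exact Submodule.subset_span ⟨Fin.last l1, rfl⟩
  · -- T1 invariance of S2
    intro x hx
    apply mem_S2_of_vanish
    intro p hp
    simp only [T1]
    split_ifs with h
    · apply vanish_of_mem_S2 l0 l1 x hx
      simp only [ne_eq, Fin.ext_iff, Fin.val_last]
      have := p.1.isLt
      omega
    · rfl
  · -- T2 invariance of S2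
    intro x hx
    apply mem_S2_of_vanish
    intro p hp
    simp only [T2]
    split_ifs with h
    · exact vanish_of_mem_S2 l0 l1 x hx _ hp
    · rfl
  · -- minimality of S2
    rintro W ⟨hv, _, hT2⟩
    apply Submodule.span_le.mpr
    rintro _ ⟨m, rfl⟩
    have key : ∀ t (ht : t ≤ l1),
        (Pi.single (Fin.last l0, (⟨l1 - t, by omega⟩ : Fin (l1+1))) 1 : Tensor l0 l1) ∈ W := by
      intro t
      induction t with
      | zero =>
        intro _
        have : (⟨l1 - 0, by omega⟩ : Fin (l1+1)) = Fin.last l1 := by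
          simp [Fin.ext_iff]
        rw [this]
        exact hv
      | succ n ih =>
        intro ht
        have h1 : (⟨l1 - n, by omega⟩ : Fin (l1+1)) = ⟨(l1 - (n+1)) + 1, by omega⟩ := by
          simp [Fin.ext_iff]; omega
        have := hT2 _ (ih (by omega))
        rw [h1, T2_single l0 l1 (l1 - (n+1)) (by omega)] at this
        exact this
    have := key (l1 - m.val) (by omega)
    have hm : (⟨l1 - (l1 - m.val), by omega⟩ : Fin (l1+1)) = m := by
      simp [Fin.ext_iff]; omega
    rwa [hm] at this
  · -- intersection
    exact inter_eq l0 l1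
  · -- dimension
    have li : LinearIndependent ℂ (fun p : Fin (l0+1) × Fin (l1+1) =>
        (Pi.single p 1 : Tensor l0 l1)) := by
      have := (Pi.basisFun ℂ (Fin (l0+1) × Fin (l1+1))).linearIndependent
      convert this using 1
      funext p
      simp [Pi.basisFun_apply]
    have li1 : LinearIndependent ℂ (fun m : Fin (l0+1) =>
        (Pi.single (m, (0 : Fin (l1+1))) 1 : Tensor l0 l1)) :=
      li.comp (fun m => (m, 0)) (fun a b h => (Prod.ext_iff.mp h).1)
    have li2 : LinearIndependent ℂ (fun m : Fin (l1+1) =>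
        (Pi.single (Fin.last l0, m) 1 : Tensor l0 l1)) :=
      li.comp (fun m => (Fin.last l0, m)) (fun a b h => (Prod.ext_iff.mp h).2)
    have h1 : Module.finrank ℂ (S1 l0 l1) = l0 + 1 := by
      rw [S1, finrank_span_eq_card li1, Fintype.card_fin]
    have h2 : Module.finrank ℂ (S2 l0 l1) = l1 + 1 := by
      rw [S2, finrank_span_eq_card li2, Fintype.card_fin]
    have hinter : Module.finrank ℂ ↥(S1 l0 l1 ⊓ S2 l0 l1) = 1 := by
      rw [inter_eq l0 l1, finrank_span_singleton]
      intro h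
      have := congrFun h (Fin.last l0, 0)
      simp at this
    have := Submodule.finrank_sup_add_finrank_inf_eq (S1 l0 l1) (S2 l0 l1)
    rw [h1, h2, hinter] at this
    omega
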